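/- Let (φ̂, ν̂) be a saddle point of L_{p,μ}. Let ν₀ ∈ H and, for k ≥ 1, let φ_k ∈ V satisfy G(φ) − G(φ_k) + ⟨ν_{k−1} + r(Bφ_k − p), Bφ − Bφ_k⟩ ≥ 0 for all φ ∈ V, and set ν_k = ν_{k−1} + ρ_ν(Bφ_k − p − s(ν_{k−1} − μ)). If 0 < ρ_ν < 2r/(2rs + 1), then ν_k → ν̂ and Bφ_k → Bφ̂ strongly in H as k → ∞; if moreover B is injective with closed range, then φ_k → φ̂ strongly in V. -/

import Mathlib

set_option maxHeartbeats 1000000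


open RealInnerProductSpace Filter Topology

/-- Lemma 1: convergence of the inner Uzawa iteration for the
saddle point of L_{p,μ}. -/
theorem inner_uzawa_convergence
    {V H : Type*} [NormedAddCommGroup V] [InnerProductSpace ℝ V] [CompleteSpace V]
    [NormedAddCommGroup H] [InnerProductSpace ℝ H] [CompleteSpace H]
    (B : V →L[ℝ] H) (G : V → ℝ)
    (hGconv : ConvexOn ℝ Set.univ G) (hGlsc : LowerSemicontinuous G)
    (r s : ℝ) (hr : 0 < r) (hs : 0 < s) (p μ : H)
    (Lpμ : V → H → ℝ)
    (hLpμ : ∀ (φ : V) (ν : H), Lpμ φ ν =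
      G φ + ⟪ν, B φ - p⟫ + (r/2) * ‖B φ - p‖^2 - (s/2) * ‖ν - μ‖^2)
    (φhat : V) (νhat : H)
    (hsaddle : ∀ (φ : V) (ν : H), Lpμ φhat ν ≤ Lpμ φhat νhat ∧ Lpμ φhat νhat ≤ Lpμ φ νhat)
    (ρν : ℝ) (hρν1 : 0 < ρν) (hρν2 : ρν < 2*r / (2*r*s + 1))
    (φseq : ℕ → V) (νseq : ℕ → H)
    (hφk : ∀ k, 1 ≤ k → ∀ φ : V,
      G φ - G (φseq k) + ⟪νseq (k-1) + r • (B (φseq k) - p), B φ - B (φseq k)⟫ ≥ 0)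
    (hνk : ∀ k, 1 ≤ k →
      νseq k = νseq (k-1) + ρν • (B (φseq k) - p - s • (νseq (k-1) - μ))) :
    Tendsto νseq atTop (nhds νhat) ∧
    Tendsto (fun k => B (φseq k)) atTop (nhds (B φhat)) ∧
    (Function.Injective B → IsClosed (Set.range B) →
      Tendsto φseq atTop (nhds φhat)) := by
  -- Step 0: basic facts about ρν
  have hden : 0 < 2*r*s + 1 := by positivity
  have hρν2' : ρν * (2*r*s + 1) < 2*r := (lt_div_iff₀ hden).mp hρν2
  have hρs : ρν * s < 1 := by nlinarith
  -- Step 1: optimality in ν:  B φhat - p = s • (νhat - μ)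
  have hb : B φhat - p = s • (νhat - μ) := by
    set d := B φhat - p with hd
    set h := d - s • (νhat - μ) with hh
    have hsd := (hsaddle φhat (νhat + s⁻¹ • h)).1
    rw [hLpμ, hLpμ] at hsd
    rw [← hd] at hsd
    have e1 : ⟪νhat + s⁻¹ • h, d⟫ = ⟪νhat, d⟫ + s⁻¹ * ⟪h, d⟫ := by
      rw [inner_add_left, real_inner_smul_left]
    have e2 : νhat + s⁻¹ • h - μ = (νhat - μ) + s⁻¹ • h := by abel
    have e3 : ‖(νhat - μ) + s⁻¹ • h‖^2
        = ‖νhat - μ‖^2 + 2 * (s⁻¹ * ⟪νhat - μ, h⟫) + s⁻¹^2 * ‖h‖^2 := by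
      rw [norm_add_sq_real, real_inner_smul_right, norm_smul]
      rw [Real.norm_eq_abs, abs_of_pos (by positivity : (0:ℝ) < s⁻¹)]
      ring
    have e4 : ⟪h, d⟫ = ‖h‖^2 + s * ⟪νhat - μ, h⟫ := by
      have hdh : d = h + s • (νhat - μ) := by rw [hh]; abel
      rw [hdh, inner_add_right, real_inner_smul_right, real_inner_comm (νhat - μ) h,
        real_inner_self_eq_norm_sq]
    rw [e2, e3, e1, e4] at hsd
    have key : s⁻¹ * (‖h‖^2 + s * ⟪νhat - μ, h⟫)
        - s/2 * (2*(s⁻¹*⟪νhat - μ, h⟫) + s⁻¹^2*‖h‖^2) ≤ 0 := by linarith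
    have e6 : s⁻¹ * (‖h‖^2 + s * ⟪νhat - μ, h⟫)
        - s/2 * (2*(s⁻¹*⟪νhat - μ, h⟫) + s⁻¹^2*‖h‖^2) = (1/2)*(s⁻¹*‖h‖^2) := by
      field_simp
      ring
    have key2 : s⁻¹ * ‖h‖^2 ≤ 0 := by linarith
    have hss : s * s⁻¹ = 1 := mul_inv_cancel₀ hs.ne'
    have hN : ‖h‖^2 ≤ 0 := by
      nlinarith [mul_le_mul_of_nonneg_left key2 hs.le]
    have hnz : ‖h‖ = 0 := by nlinarith [norm_nonneg h]
    have hz : h = 0 := norm_eq_zero.mp hnz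
    rw [hh] at hz
    exact sub_eq_zero.mp hz
  -- Step 2: variational inequality at φhat
  have hVI : ∀ φ : V, 0 ≤ G φ - G φhat + ⟪νhat + r • (B φhat - p), B φ - B φhat⟫ := by
    intro φ
    set b := B φhat - p with hbdef
    set w := B φ - B φhat with hw
    set X := G φ - G φhat + ⟪νhat + r • b, w⟫ with hX
    have hXeq : X = G φ - G φhat + ⟪νhat, w⟫ + r * ⟪b, w⟫ := by
      rw [hX, inner_add_left, real_inner_smul_left]; ring
    have hstep : ∀ t : ℝ, 0 < t → t ≤ 1 → 0 ≤ X + (r*t/2) * ‖w‖^2 := by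
      intro t ht ht1
      set ψ := φhat + t • (φ - φhat) with hψ
      have hsd := (hsaddle ψ νhat).2
      rw [hLpμ, hLpμ] at hsd
      have hBψ : B ψ - p = b + t • w := by
        rw [hψ, map_add, map_smul, map_sub, hbdef, hw]
        module
      have hGψ : G ψ ≤ (1 - t) * G φhat + t * G φ := by
        have := hGconv.2 (Set.mem_univ φhat) (Set.mem_univ φ)
          (by linarith : (0:ℝ) ≤ 1 - t) ht.le (by ring)
        have hψ2 : (1 - t) • φhat + t • φ = ψ := by rw [hψ]; module
        rwa [hψ2] at this
      have e1 : ⟪νhat, b + t • w⟫ = ⟪νhat, b⟫ + t * ⟪νhat, w⟫ := by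
        rw [inner_add_right, real_inner_smul_right]
      have e2 : ‖b + t • w‖^2 = ‖b‖^2 + 2*(t*⟪b, w⟫) + t^2*‖w‖^2 := by
        rw [norm_add_sq_real, real_inner_smul_right, norm_smul,
          Real.norm_eq_abs, abs_of_pos ht]
        ring
      rw [hBψ, e1, e2] at hsd
      have : 0 ≤ t * (G φ - G φhat) + t * ⟪νhat, w⟫ + r*t*⟪b,w⟫ + (r*t^2/2)*‖w‖^2 := by
        nlinarith
      have ht' : 0 ≤ X + (r*t/2)*‖w‖^2 := by
        rw [hXeq]
        nlinarith
      exact ht'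
    by_contra hXneg
    push_neg at hXneg
    set W := ‖w‖^2 with hW
    have hW0 : 0 ≤ W := sq_nonneg _
    set t := min 1 ((-X)/(r*W+1)) with htdef
    have hrW : 0 < r*W+1 := by positivity
    have ht0 : 0 < t := lt_min one_pos (div_pos (by linarith) hrW)
    have ht1 : t ≤ 1 := min_le_left _ _
    have ht2 : t * (r*W+1) ≤ -X := by
      have := min_le_right 1 ((-X)/(r*W+1))
      calc t * (r*W+1) ≤ ((-X)/(r*W+1)) * (r*W+1) := by
            exact mul_le_mul_of_nonneg_right this hrW.le
        _ = -X := by field_simp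
    have := hstep t ht0 ht1
    nlinarith
  -- Step 3: key inner product inequality
  have hkey : ∀ k, 1 ≤ k →
      ⟪νseq (k-1) - νhat, B (φseq k) - B φhat⟫ ≤ -(r * ‖B (φseq k) - B φhat‖^2) := by
    intro k hk
    have A := hφk k hk φhat
    have Vk := hVI (φseq k)
    have hw' : B φhat - B (φseq k) = -(B (φseq k) - B φhat) := by abel
    have hbw : B (φseq k) - p = (B φhat - p) + (B (φseq k) - B φhat) := by abel
    rw [hw', hbw] at A
    simp only [inner_neg_right, inner_add_left, real_inner_smul_left,
      real_inner_self_eq_norm_sq] at A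
    rw [inner_add_left, real_inner_smul_left] at Vk
    rw [inner_sub_left]
    linarith
  -- Step 4: the one-step contraction estimate
  have hrec : ∀ k, 1 ≤ k →
      ‖νseq k - νhat‖^2 + (ρν*(2*r - ρν*(2*r*s+1))) * ‖B (φseq k) - B φhat‖^2
        ≤ (1-ρν*s)^2 * ‖νseq (k-1) - νhat‖^2 := by
    intro k hk
    have h1ρs : (0:ℝ) < 1 - ρν*s := by linarith
    have he : νseq k - νhat
        = (1-ρν*s) • (νseq (k-1) - νhat) + ρν • (B (φseq k) - B φhat) := by
      rw [hνk k hk]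
      rw [show (p:H) = B φhat - s•(νhat - μ) from by rw [← hb]; abel]
      module
    have hexp : ‖νseq k - νhat‖^2
        = ((1-ρν*s)*‖νseq (k-1) - νhat‖)^2
          + 2*((1-ρν*s)*(ρν*⟪νseq (k-1) - νhat, B (φseq k) - B φhat⟫))
          + (ρν*‖B (φseq k) - B φhat‖)^2 := by
      rw [he, norm_add_sq_real, norm_smul, norm_smul, real_inner_smul_left,
        real_inner_smul_right, Real.norm_eq_abs, Real.norm_eq_abs,
        abs_of_pos h1ρs, abs_of_pos hρν1]
    have h2 : (0:ℝ) ≤ 2*((1-ρν*s)*ρν) := by positivity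
    nlinarith [hexp, mul_le_mul_of_nonneg_left (hkey k hk) h2]
  -- Step 5: geometric decay
  have hq0 : (0:ℝ) ≤ (1-ρν*s)^2 := sq_nonneg _
  have hq1 : (1-ρν*s)^2 < 1 := by nlinarith [mul_pos hρν1 hs]
  have hc : (0:ℝ) < ρν*(2*r - ρν*(2*r*s+1)) := by nlinarith
  have hE : ∀ k, ‖νseq k - νhat‖^2 ≤ ((1-ρν*s)^2)^k * ‖νseq 0 - νhat‖^2 := by
    intro k
    induction k with
    | zero => simp
    | succ m ih =>
      have h1 := hrec (m+1) (Nat.le_add_left 1 m)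
      simp only [Nat.add_sub_cancel] at h1
      have h2 : (ρν*(2*r - ρν*(2*r*s+1))) * ‖B (φseq (m+1)) - B φhat‖^2 ≥ 0 :=
        mul_nonneg hc.le (sq_nonneg _)
      calc ‖νseq (m+1) - νhat‖^2 ≤ (1-ρν*s)^2 * ‖νseq m - νhat‖^2 := by linarith
        _ ≤ (1-ρν*s)^2 * (((1-ρν*s)^2)^m * ‖νseq 0 - νhat‖^2) :=
            mul_le_mul_of_nonneg_left ih hq0
        _ = ((1-ρν*s)^2)^(m+1) * ‖νseq 0 - νhat‖^2 := by ring
  have hgeo : Tendsto (fun k : ℕ => ((1-ρν*s)^2)^k * ‖νseq 0 - νhat‖^2) atTop (𝓝 0) := by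
    simpa using (tendsto_pow_atTop_nhds_zero_of_lt_one hq0 hq1).mul_const (‖νseq 0 - νhat‖^2)
  -- ν convergence
  have hEsq : Tendsto (fun k => ‖νseq k - νhat‖^2) atTop (𝓝 0) :=
    squeeze_zero (fun k => sq_nonneg _) hE hgeo
  have hnu : Tendsto νseq atTop (𝓝 νhat) := by
    rw [tendsto_iff_norm_sub_tendsto_zero]
    have h' : Tendsto (fun k => Real.sqrt (‖νseq k - νhat‖^2)) atTop (𝓝 (Real.sqrt 0)) :=
      (Real.continuous_sqrt.tendsto 0).comp hEsq
    rw [Real.sqrt_zero] at h'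
    simpa [Real.sqrt_sq (norm_nonneg _)] using h'
  -- B φ convergence
  have hWbd : ∀ k, 1 ≤ k → ‖B (φseq k) - B φhat‖^2
      ≤ (((1-ρν*s)^2)^k * ‖νseq 0 - νhat‖^2) / (ρν*(2*r - ρν*(2*r*s+1))) := by
    intro k hk
    obtain ⟨m, rfl⟩ : ∃ m, k = m + 1 := ⟨k - 1, (Nat.succ_pred_eq_of_pos hk).symm⟩
    have h1 := hrec (m+1) (Nat.le_add_left 1 m)
    simp only [Nat.add_sub_cancel] at h1
    rw [le_div_iff₀ hc]
    have h2 := hE m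
    have h3 : (0:ℝ) ≤ ‖νseq (m+1) - νhat‖^2 := sq_nonneg _
    have : (1-ρν*s)^2 * ‖νseq m - νhat‖^2
        ≤ (1-ρν*s)^2 * (((1-ρν*s)^2)^m * ‖νseq 0 - νhat‖^2) :=
      mul_le_mul_of_nonneg_left h2 hq0
    calc ‖B (φseq (m+1)) - B φhat‖^2 * (ρν*(2*r - ρν*(2*r*s+1)))
        ≤ (1-ρν*s)^2 * (((1-ρν*s)^2)^m * ‖νseq 0 - νhat‖^2) := by linarith
      _ = ((1-ρν*s)^2)^(m+1) * ‖νseq 0 - νhat‖^2 := by ring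
  have hWgeo : Tendsto
      (fun k : ℕ => (((1-ρν*s)^2)^k * ‖νseq 0 - νhat‖^2) / (ρν*(2*r - ρν*(2*r*s+1))))
      atTop (𝓝 0) := by
    simpa using hgeo.div_const (ρν*(2*r - ρν*(2*r*s+1)))
  have hWsq : Tendsto (fun k => ‖B (φseq k) - B φhat‖^2) atTop (𝓝 0) := by
    refine squeeze_zero' (Eventually.of_forall fun k => sq_nonneg _) ?_ hWgeo
    filter_upwards [eventually_ge_atTop 1] with k hk using hWbd k hk
  have hBφ : Tendsto (fun k => B (φseq k)) atTop (𝓝 (B φhat)) := by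
    rw [tendsto_iff_norm_sub_tendsto_zero]
    have h' : Tendsto (fun k => Real.sqrt (‖B (φseq k) - B φhat‖^2)) atTop (𝓝 (Real.sqrt 0)) :=
      (Real.continuous_sqrt.tendsto 0).comp hWsq
    rw [Real.sqrt_zero] at h'
    simpa [Real.sqrt_sq (norm_nonneg _)] using h'
  refine ⟨hnu, hBφ, ?_⟩
  -- φ convergence under injectivity and closed range
  intro hinj hclosed
  set K : Submodule ℝ H := LinearMap.range (B : V →ₗ[ℝ] H) with hK
  have hKclosed : IsClosed (K : Set H) := by
    rw [hK]
    simpa [LinearMap.coe_range] using hclosed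
  haveI : CompleteSpace K := hKclosed.completeSpace_coe
  have hmem : ∀ x : V, B x ∈ K := fun x => LinearMap.mem_range_self _ x
  set f : V →L[ℝ] K := B.codRestrict K hmem with hf
  have hker : LinearMap.ker (f : V →ₗ[ℝ] K) = ⊥ := by
    rw [hf, ContinuousLinearMap.ker_codRestrict]
    exact LinearMap.ker_eq_bot.mpr hinj
  have hrange : LinearMap.range (f : V →ₗ[ℝ] K) = ⊤ := by
    rw [LinearMap.range_eq_top]
    rintro ⟨y, hy⟩
    rw [hK, LinearMap.mem_range] at hy
    obtain ⟨x, rfl⟩ := hy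
    exact ⟨x, rfl⟩
  set e : V ≃L[ℝ] K := ContinuousLinearEquiv.ofBijective f hker hrange with he
  have hsymm : ∀ x : V, e.symm (f x) = x := by
    intro x
    have hx : e x = f x := by rw [he, ContinuousLinearEquiv.coeFn_ofBijective]
    rw [← hx, ContinuousLinearEquiv.symm_apply_apply]
  have hco : Tendsto (fun k => f (φseq k)) atTop (𝓝 (f φhat)) := by
    rw [tendsto_subtype_rng]
    exact hBφ
  have hfin : Tendsto (fun k => e.symm (f (φseq k))) atTop (𝓝 (e.symm (f φhat))) :=
    (e.symm.continuous.tendsto _).comp hco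
  simp only [hsymm] at hfin
  exact hfin
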